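/- Let f : ℝ^n → ℝ^n be continuously differentiable with global flow φ, and let v ∈ ℝ^n satisfy f(v) ≠ 0. Then there exists t̄₀ > 0 such that for every t̄ ∈ (0, t̄₀] there exist σ > 0 and a closed set Σ ⊆ {φ(t,x) : t ∈ [0,t̄], x ∈ B̄(v,σ)} with the following property: for every q ∈ B̄(v,σ) there exists a unique t_q ∈ [0, t̄] such that φ(t_q, q) ∈ Σ. -/

import Mathlib

set_option maxHeartbeats 1000000

open Set Metric

/-- Existence of a forward local section through a non-equilibrium point `v` of a
continuously differentiable vector field `f` with global flow `φ`. -/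
theorem stmt_1 (n : ℕ) (hn : 1 ≤ n)
    (f : EuclideanSpace ℝ (Fin n) → EuclideanSpace ℝ (Fin n))
    (hf : ContDiff ℝ 1 f)
    (φ : ℝ → EuclideanSpace ℝ (Fin n) → EuclideanSpace ℝ (Fin n))
    (hφ0 : ∀ x, φ 0 x = x)
    (hφ' : ∀ (t : ℝ) (x : EuclideanSpace ℝ (Fin n)),
      HasDerivAt (fun s => φ s x) (f (φ t x)) t)
    (v : EuclideanSpace ℝ (Fin n)) (hv : f v ≠ 0) :
    ∃ tbar0 > (0:ℝ), ∀ tbar ∈ Ioc (0:ℝ) tbar0, ∃ σ > (0:ℝ),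
      ∃ S : Set (EuclideanSpace ℝ (Fin n)), IsClosed S ∧
        S ⊆ {y | ∃ t ∈ Icc (0:ℝ) tbar, ∃ x ∈ closedBall v σ, y = φ t x} ∧
        ∀ q ∈ closedBall v σ, ∃! tq, tq ∈ Icc (0:ℝ) tbar ∧ φ tq q ∈ S := by
  classical
  have φcont : ∀ x, Continuous fun s => φ s x := fun x =>
    continuous_iff_continuousAt.2 fun t => (hφ' t x).continuousAt
  set c0 : ℝ := ‖f v‖ with hc0def
  have hc0 : 0 < c0 := norm_pos_iff.2 hv
  obtain ⟨K, U, hU, hK⟩ := hf.contDiffAt.exists_lipschitzOnWith (x := v)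
  obtain ⟨r1, hr1pos, hr1U⟩ := Metric.mem_nhds_iff.1 hU
  obtain ⟨r2, hr2pos, hr2⟩ :=
    Metric.continuousAt_iff.1 (hf.continuous.continuousAt (x := v)) (c0 / 2) (by positivity)
  set r : ℝ := min r1 r2 / 2 with hrdef
  have hrpos : 0 < r := by positivity
  have hball : ∀ y ∈ closedBall v r, ‖f y - f v‖ ≤ c0 / 2 ∧ y ∈ U := by
    intro y hy
    have hyr : dist y v ≤ r := mem_closedBall.1 hy
    have h1 : dist y v < r1 :=
      lt_of_le_of_lt hyr (lt_of_lt_of_le (half_lt_self (by positivity)) (min_le_left _ _))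
    have h2 : dist y v < r2 :=
      lt_of_le_of_lt hyr (lt_of_lt_of_le (half_lt_self (by positivity)) (min_le_right _ _))
    exact ⟨le_of_lt (by simpa [dist_eq_norm] using hr2 h2), hr1U (mem_ball.2 h1)⟩
  have hfK : LipschitzOnWith K f (closedBall v r) := hK.mono fun y hy => (hball y hy).2
  set M : ℝ := 3 / 2 * c0 with hMdef
  have hMpos : 0 < M := by positivity
  have hfM : ∀ y ∈ closedBall v r, ‖f y‖ ≤ M := by
    intro y hy
    have h := (hball y hy).1
    calc ‖f y‖ = ‖f y - f v + f v‖ := by rw [sub_add_cancel]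
      _ ≤ ‖f y - f v‖ + ‖f v‖ := norm_add_le _ _
      _ ≤ c0 / 2 + c0 := by linarith
      _ = M := by ring
  set c : ℝ := c0 ^ 2 / 2 with hcdef
  have hcpos : 0 < c := by positivity
  have hinner : ∀ y ∈ closedBall v r, c ≤ inner (𝕜 := ℝ) (f v) (f y) := by
    intro y hy
    have h := (hball y hy).1
    have h1 : |inner (𝕜 := ℝ) (f v) (f y - f v)| ≤ ‖f v‖ * ‖f y - f v‖ :=
      abs_real_inner_le_norm _ _
    have h2 : inner (𝕜 := ℝ) (f v) (f y) =
        inner (𝕜 := ℝ) (f v) (f v) + inner (𝕜 := ℝ) (f v) (f y - f v) := by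
      rw [← inner_add_right, add_sub_cancel]
    have h3 : inner (𝕜 := ℝ) (f v) (f v) = c0 ^ 2 := by
      rw [real_inner_self_eq_norm_sq]
    have h4 : ‖f v‖ * ‖f y - f v‖ ≤ c0 * (c0 / 2) := by
      apply mul_le_mul le_rfl h (norm_nonneg _) (le_of_lt hc0)
    have h5 : -(c0 * (c0 / 2)) ≤ inner (𝕜 := ℝ) (f v) (f y - f v) := by
      have := abs_le.1 h1
      linarith
    rw [h2, h3]
    nlinarith
  set tb0 : ℝ := r / (2 * M) with htb0def
  have htb0pos : 0 < tb0 := by positivity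
  have hMtb0 : M * tb0 = r / 2 := by
    rw [htb0def]; field_simp
  -- trajectories starting in closedBall v (r/2) stay in closedBall v r up to time tb0
  have traj : ∀ x ∈ closedBall v (r / 2), ∀ t ∈ Icc (0:ℝ) tb0, ‖φ t x - x‖ ≤ M * t := by
    intro x hx
    have hsub : Icc (0:ℝ) tb0 ⊆ {t | ‖φ t x - x‖ ≤ M * t} := by
      apply IsClosed.Icc_subset_of_forall_exists_gt
      · exact (isClosed_le (((φcont x).sub continuous_const).norm)
          (continuous_const.mul continuous_id)).inter isClosed_Icc
      · show ‖φ 0 x - x‖ ≤ M * 0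
        simp [hφ0]
      · rintro t ⟨ht, ht0, httb⟩ y hy
        simp only [mem_setOf_eq] at ht
        have hxt : ‖φ t x - v‖ < r := by
          have h1 : ‖φ t x - v‖ ≤ ‖φ t x - x‖ + ‖x - v‖ := norm_sub_le_norm_sub_add_norm_sub _ _ _
          have h2 : ‖x - v‖ ≤ r / 2 := by
            simpa [dist_eq_norm] using mem_closedBall.1 hx
          have h3 : M * t < M * tb0 := by
            exact mul_lt_mul_of_pos_left httb hMpos
          calc ‖φ t x - v‖ ≤ M * t + r / 2 := by linarith [ht]
            _ < M * tb0 + r / 2 := by linarith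
            _ = r := by rw [hMtb0]; ring
        have hopen : IsOpen {u : ℝ | ‖φ u x - v‖ < r} :=
          isOpen_lt (((φcont x).sub continuous_const).norm) continuous_const
        obtain ⟨δ, hδpos, hδ⟩ := Metric.isOpen_iff.1 hopen t hxt
        set z : ℝ := min (t + δ / 2) y with hzdef
        have hzt : t < z := lt_min (by linarith) hy
        have hIccball : ∀ u ∈ Icc t z, φ u x ∈ closedBall v r := by
          intro u hu
          have : u ∈ ball t δ := by
            rw [mem_ball, Real.dist_eq, abs_sub_lt_iff]
            constructor
            · have : u ≤ z := hu.2
              have : z ≤ t + δ / 2 := min_le_left _ _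
              linarith [hu.2]
            · linarith [hu.1]
          have := hδ this
          simp only [mem_setOf_eq] at this
          simpa [mem_closedBall, dist_eq_norm] using le_of_lt this
        have hmvt : ‖φ z x - φ t x‖ ≤ M * ‖z - t‖ := by
          apply Convex.norm_image_sub_le_of_norm_hasDerivWithin_le
            (f' := fun u => f (φ u x))
            (fun u hu => (hφ' u x).hasDerivWithinAt)
            (fun u hu => hfM _ (hIccball u hu)) (convex_Icc t z)
            (left_mem_Icc.2 (le_of_lt hzt)) (right_mem_Icc.2 (le_of_lt hzt))
        refine ⟨z, ?_, hzt, min_le_right _ _⟩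
        have hnz : ‖z - t‖ = z - t := by
          rw [Real.norm_eq_abs, abs_of_nonneg]; linarith
        have : ‖φ z x - x‖ ≤ ‖φ z x - φ t x‖ + ‖φ t x - x‖ := norm_sub_le_norm_sub_add_norm_sub _ _ _
        show ‖φ z x - x‖ ≤ M * z
        rw [hnz] at hmvt
        have : M * (z - t) + M * t = M * z := by ring
        linarith [ht]
    intro t htt
    exact hsub htt
  have traj2 : ∀ x ∈ closedBall v (r / 2), ∀ t ∈ Icc (0:ℝ) tb0, φ t x ∈ closedBall v r := by
    intro x hx t ht
    have h1 := traj x hx t ht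
    have h2 : ‖x - v‖ ≤ r / 2 := by simpa [dist_eq_norm] using mem_closedBall.1 hx
    have h3 : M * t ≤ M * tb0 := mul_le_mul_of_nonneg_left ht.2 (le_of_lt hMpos)
    rw [mem_closedBall, dist_eq_norm]
    calc ‖φ t x - v‖ ≤ ‖φ t x - x‖ + ‖x - v‖ := norm_sub_le_norm_sub_add_norm_sub _ _ _
      _ ≤ M * tb0 + r / 2 := by linarith
      _ = r := by rw [hMtb0]; ring
  -- Gronwall: continuous dependence on initial conditions
  have gron : ∀ x ∈ closedBall v (r / 2), ∀ y ∈ closedBall v (r / 2), ∀ t ∈ Icc (0:ℝ) tb0,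
      dist (φ t x) (φ t y) ≤ dist x y * Real.exp (K * t) := by
    intro x hx y hy t ht
    have h := dist_le_of_trajectories_ODE_of_mem (v := fun _ z => f z)
      (s := fun _ => closedBall v r) (K := K) (a := 0) (b := tb0) (δ := dist x y)
      (f := fun u => φ u x) (g := fun u => φ u y)
      (fun _ _ => hfK) ((φcont x).continuousOn)
      (fun u _ => (hφ' u x).hasDerivWithinAt)
      (fun u hu => traj2 x hx u (Ico_subset_Icc_self hu))
      ((φcont y).continuousOn)
      (fun u _ => (hφ' u y).hasDerivWithinAt)
      (fun u hu => traj2 y hy u (Ico_subset_Icc_self hu))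
      (by simp [hφ0]) t ht
    simpa using h
  -- joint continuity on the compact domain
  have jointbound : ∀ p ∈ Icc (0:ℝ) tb0 ×ˢ closedBall v (r / 2),
      ∀ p' ∈ Icc (0:ℝ) tb0 ×ˢ closedBall v (r / 2),
      dist (φ p'.1 p'.2) (φ p.1 p.2) ≤ M * |p'.1 - p.1| + Real.exp (K * tb0) * dist p'.2 p.2 := by
    rintro ⟨t, x⟩ ⟨ht, hx⟩ ⟨t', x'⟩ ⟨ht', hx'⟩
    have h1 : dist (φ t' x') (φ t x') ≤ M * |t' - t| := by
      have := Convex.norm_image_sub_le_of_norm_hasDerivWithin_le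
        (f := fun u => φ u x') (f' := fun u => f (φ u x')) (s := Icc (0:ℝ) tb0)
        (fun u hu => (hφ' u x').hasDerivWithinAt)
        (fun u hu => hfM _ (traj2 x' hx' u hu)) (convex_Icc _ _) ht ht'
      simpa [dist_eq_norm, Real.norm_eq_abs] using this
    have h2 : dist (φ t x') (φ t x) ≤ Real.exp (K * tb0) * dist x' x := by
      have h := gron x' hx' x hx t ht
      have hexp : Real.exp (K * t) ≤ Real.exp (K * tb0) :=
        Real.exp_le_exp.2 (mul_le_mul_of_nonneg_left ht.2 K.coe_nonneg)
      calc dist (φ t x') (φ t x) ≤ dist x' x * Real.exp (K * t) := h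
        _ ≤ dist x' x * Real.exp (K * tb0) :=
            mul_le_mul_of_nonneg_left hexp dist_nonneg
        _ = Real.exp (K * tb0) * dist x' x := by ring
    calc dist (φ t' x') (φ t x) ≤ dist (φ t' x') (φ t x') + dist (φ t x') (φ t x) :=
          dist_triangle _ _ _
      _ ≤ M * |t' - t| + Real.exp (K * tb0) * dist x' x := by linarith
  have Φcont : ContinuousOn (fun p : ℝ × EuclideanSpace ℝ (Fin n) => φ p.1 p.2)
      (Icc (0:ℝ) tb0 ×ˢ closedBall v (r / 2)) := by
    rw [Metric.continuousOn_iff]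
    intro p hp ε hε
    have hEpos : (0:ℝ) < Real.exp (K * tb0) := Real.exp_pos _
    refine ⟨ε / (M + Real.exp (K * tb0) + 1), by positivity, fun p' hp' hd => ?_⟩
    have h := jointbound p hp p' hp'
    have h1 : |p'.1 - p.1| ≤ dist p' p := by
      rw [Prod.dist_eq]
      exact le_trans (le_of_eq (Real.dist_eq _ _).symm) (le_max_left _ _)
    have h2 : dist p'.2 p.2 ≤ dist p' p := by
      rw [Prod.dist_eq]; exact le_max_right _ _
    have hdn : (0:ℝ) ≤ dist p' p := dist_nonneg
    have key : dist (φ p'.1 p'.2) (φ p.1 p.2) ≤ (M + Real.exp (K * tb0)) * dist p' p := by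
      have := mul_le_mul_of_nonneg_left h1 (le_of_lt hMpos)
      have := mul_le_mul_of_nonneg_left h2 (le_of_lt hEpos)
      nlinarith [abs_nonneg (p'.1 - p.1)]
    calc dist (φ p'.1 p'.2) (φ p.1 p.2) ≤ (M + Real.exp (K * tb0)) * dist p' p := key
      _ < (M + Real.exp (K * tb0) + 1) * (ε / (M + Real.exp (K * tb0) + 1)) := by
          apply lt_of_le_of_lt (mul_le_mul_of_nonneg_right (le_add_of_nonneg_right zero_le_one)
            hdn)
          exact mul_lt_mul_of_pos_left hd (by positivity)
      _ = ε := by field_simp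
  -- the linear functional
  set G : EuclideanSpace ℝ (Fin n) →L[ℝ] ℝ := innerSL ℝ (f v) with hGdef
  have hGapp : ∀ y, G y = inner (𝕜 := ℝ) (f v) y := fun y => rfl
  have hGd : ∀ (t : ℝ) (q : EuclideanSpace ℝ (Fin n)),
      HasDerivAt (fun s => G (φ s q - v)) (G (f (φ t q))) t := fun t q =>
    G.hasFDerivAt.comp_hasDerivAt t ((hφ' t q).sub_const v)
  -- main construction
  refine ⟨tb0, htb0pos, fun tbar htbar => ?_⟩
  obtain ⟨htbarpos, htbarle⟩ := htbar
  set σ : ℝ := min (r / 2) (c * tbar / (4 * c0)) with hσdef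
  have hσpos : 0 < σ := lt_min (by positivity) (by positivity)
  have hσr : σ ≤ r / 2 := min_le_left _ _
  have hσc : c0 * σ ≤ c * tbar / 4 := by
    have h := min_le_right (r / 2) (c * tbar / (4 * c0))
    calc c0 * σ ≤ c0 * (c * tbar / (4 * c0)) := mul_le_mul_of_nonneg_left h (le_of_lt hc0)
      _ = c * tbar / 4 := by field_simp
  set L : ℝ := c * tbar / 2 with hLdef
  have hballσ : closedBall v σ ⊆ closedBall v (r / 2) := closedBall_subset_closedBall hσr
  have hIccsub : Icc (0:ℝ) tbar ⊆ Icc (0:ℝ) tb0 := Icc_subset_Icc le_rfl htbarle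
  -- growth of g q
  have growth : ∀ q ∈ closedBall v σ, ∀ s ∈ Icc (0:ℝ) tbar, ∀ t ∈ Icc (0:ℝ) tbar, s ≤ t →
      c * (t - s) ≤ G (φ t q - v) - G (φ s q - v) := by
    intro q hq s hs t ht hst
    apply (convex_Icc (0:ℝ) tbar).mul_sub_le_image_sub_of_le_deriv
      (Continuous.continuousOn (by exact G.continuous.comp ((φcont q).sub continuous_const)))
      (fun u _ => ((hGd u q).differentiableAt).differentiableWithinAt)
      (fun u hu => ?_) s hs t ht hst
    rw [(hGd u q).deriv]
    rw [hGapp]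
    apply hinner
    rw [interior_Icc] at hu
    exact traj2 q (hballσ hq) u (hIccsub ⟨le_of_lt hu.1, le_of_lt hu.2⟩)
  -- uniqueness of crossing times
  have uniq : ∀ q ∈ closedBall v σ, ∀ t1 ∈ Icc (0:ℝ) tbar, ∀ t2 ∈ Icc (0:ℝ) tbar,
      G (φ t1 q - v) = G (φ t2 q - v) → t1 = t2 := by
    intro q hq t1 ht1 t2 ht2 heq
    rcases lt_trichotomy t1 t2 with h | h | h
    · have h1 := growth q hq t1 ht1 t2 ht2 (le_of_lt h)
      rw [heq, sub_self] at h1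
      have h2 : 0 < c * (t2 - t1) := mul_pos hcpos (by linarith)
      linarith
    · exact h
    · have h1 := growth q hq t2 ht2 t1 ht1 (le_of_lt h)
      rw [← heq, sub_self] at h1
      have h2 : 0 < c * (t1 - t2) := mul_pos hcpos (by linarith)
      linarith
  -- the image set is compact
  set Img : Set (EuclideanSpace ℝ (Fin n)) :=
    {y | ∃ t ∈ Icc (0:ℝ) tbar, ∃ x ∈ closedBall v σ, y = φ t x} with hImgdef
  have himg : Img = (fun p : ℝ × EuclideanSpace ℝ (Fin n) => φ p.1 p.2) ''
      (Icc (0:ℝ) tbar ×ˢ closedBall v σ) := by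
    ext y
    constructor
    · rintro ⟨t, ht, x, hx, rfl⟩; exact ⟨(t, x), ⟨ht, hx⟩, rfl⟩
    · rintro ⟨⟨t, x⟩, ⟨ht, hx⟩, rfl⟩; exact ⟨t, ht, x, hx, rfl⟩
  have hImgcompact : IsCompact Img := by
    rw [himg]
    exact (isCompact_Icc.prod (isCompact_closedBall v σ)).image_of_continuousOn
      (Φcont.mono (prod_mono hIccsub hballσ))
  -- the section
  refine ⟨σ, hσpos, {y | G (y - v) = L} ∩ Img,
    (isClosed_eq (G.continuous.comp (continuous_id.sub continuous_const)) continuous_const).inter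
      hImgcompact.isClosed,
    inter_subset_right, fun q hq => ?_⟩
  -- existence of the crossing time via IVT
  have hg0 : |G (φ 0 q - v)| ≤ c * tbar / 4 := by
    rw [hφ0, hGapp]
    have h1 : |inner (𝕜 := ℝ) (f v) (q - v)| ≤ ‖f v‖ * ‖q - v‖ := abs_real_inner_le_norm _ _
    have h2 : ‖q - v‖ ≤ σ := by simpa [dist_eq_norm] using mem_closedBall.1 hq
    calc |inner (𝕜 := ℝ) (f v) (q - v)| ≤ c0 * ‖q - v‖ := h1
      _ ≤ c0 * σ := mul_le_mul_of_nonneg_left h2 (le_of_lt hc0)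
      _ ≤ c * tbar / 4 := hσc
  have h0mem : (0:ℝ) ∈ Icc (0:ℝ) tbar := left_mem_Icc.2 (le_of_lt htbarpos)
  have htbarmem : tbar ∈ Icc (0:ℝ) tbar := right_mem_Icc.2 (le_of_lt htbarpos)
  have hgrow := growth q hq 0 h0mem tbar htbarmem (le_of_lt htbarpos)
  have hL0 : G (φ 0 q - v) ≤ L := by
    have := abs_le.1 hg0
    rw [hLdef]
    nlinarith
  have hLtbar : L ≤ G (φ tbar q - v) := by
    have := abs_le.1 hg0
    rw [hLdef]
    nlinarith
  have hIVT := intermediate_value_Icc (le_of_lt htbarpos)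
    (Continuous.continuousOn
      (by exact G.continuous.comp ((φcont q).sub continuous_const) :
        Continuous fun t => G (φ t q - v)))
  obtain ⟨tq, htq, hgtq⟩ := hIVT ⟨hL0, hLtbar⟩
  refine ⟨tq, ⟨htq, hgtq, tq, htq, q, hq, rfl⟩, ?_⟩
  rintro t' ⟨ht', hG', -⟩
  exact uniq q hq t' ht' tq htq (hG'.trans hgtq.symm)
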